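/- Let G be a groupoid and let A be a set of arrows of G such that every source fiber Au is finite. Let (A_i)_{i∈I} be a finite family of subsets of A, let M be a positive integer, let 0 < λ ≤ 1 and 0 ≤ ε ≤ 1/2, and assume that (A_i)_{i∈I} is a λ-even covering of A with multiplicity M, i.e., for every unit u ∈ s(A): every g ∈ Au belongs to A_i u for at most M indices i ∈ I, and ∑_{i∈I} |A_i u| ≥ λ·M·|Au|. Then for each unit u ∈ s(A) there exists a subset J_u ⊆ I such that the family (A_j u)_{j∈J_u} is ε-disjoint and |⋃_{j∈J_u} A_j u| ≥ ε·λ·|Au|. -/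
import Mathlib


open CategoryTheory

/-- The type of arrows of a groupoid `G`. -/
structure GArr (G : Type*) [Groupoid G] where
  src : G
  tgt : G
  hom : src ⟶ tgt

namespace GArr

variable {G : Type*} [Groupoid G]

/-- The composite arrow `a * b` (apply `b` first, then `a`), defined when `s(a) = r(b)`,
i.e. when `b.tgt = a.src`. -/
def comp (a b : GArr G) (h : b.tgt = a.src) : GArr G :=
  ⟨b.src, a.tgt, b.hom ≫ eqToHom h ≫ a.hom⟩

/-- The identity arrow at a unit `u`. -/
def unit (u : G) : GArr G := ⟨u, u, 𝟙 u⟩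

/-- The inverse arrow. -/
def inv (a : GArr G) : GArr G := ⟨a.tgt, a.src, Groupoid.inv a.hom⟩

end GArr

variable {G : Type*} [Groupoid G]

/-- The product set `A B = {ab : a ∈ A, b ∈ B, s(a) = r(b)}`. -/
def setProd (A B : Set (GArr G)) : Set (GArr G) :=
  {x | ∃ a ∈ A, ∃ b ∈ B, ∃ h : b.tgt = a.src, x = a.comp b h}

/-- For a set of arrows `C` and an arrow `g`, `C g = {cg : c ∈ C, s(c) = r(g)}`. -/
def smulSet (C : Set (GArr G)) (g : GArr G) : Set (GArr G) :=
  {x | ∃ c ∈ C, ∃ h : g.tgt = c.src, x = c.comp g h}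

/-- The source fiber `A u = {a ∈ A : s(a) = u}`. -/
def srcFiber (A : Set (GArr G)) (u : G) : Set (GArr G) := {a ∈ A | a.src = u}

/-- The range fiber `u A = {a ∈ A : r(a) = u}`. -/
def tgtFiber (A : Set (GArr G)) (u : G) : Set (GArr G) := {a ∈ A | a.tgt = u}

/-- The `C`-boundary `∂_C(B)` of a set of arrows `B`. -/
def cBoundary (C B : Set (GArr G)) : Set (GArr G) :=
  {g | (smulSet C g ∩ B).Nonempty ∧ (smulSet C g ∩ Bᶜ).Nonempty}


/-- cf. Lemma 3.5. Let `A` be a set of arrows with finite source fibers and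
let `(A_i)_{i ∈ I}` be a finite family of subsets of `A` forming a `λ`-even covering of `A`
with multiplicity `M`. If `0 < λ ≤ 1` and `0 ≤ ε ≤ 1/2`, then for each unit `u ∈ s(A)` there
is a subset `J_u ⊆ I` such that `(A_j u)_{j ∈ J_u}` is `ε`-disjoint and
`|⋃_{j ∈ J_u} A_j u| ≥ ε·λ·|Au|`. -/
theorem epsilon_disjoint_subcollection {G : Type*} [Groupoid G] {I : Type*} [Fintype I]
    (A : Set (GArr G)) (hAfin : ∀ u : G, (srcFiber A u).Finite)
    (Afam : I → Set (GArr G)) (hsub : ∀ i : I, Afam i ⊆ A)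
    (M : ℕ) (hM : 0 < M)
    (lam ε : ℝ) (hlam0 : 0 < lam) (hlam1 : lam ≤ 1) (hε0 : 0 ≤ ε) (hε2 : ε ≤ 1 / 2)
    (hmult : ∀ u : G, (∃ a ∈ A, a.src = u) → ∀ g ∈ srcFiber A u,
      ({i : I | g ∈ srcFiber (Afam i) u}).ncard ≤ M)
    (hcover : ∀ u : G, (∃ a ∈ A, a.src = u) →
      lam * M * ((srcFiber A u).ncard : ℝ) ≤ ∑ i : I, ((srcFiber (Afam i) u).ncard : ℝ)) :
    ∀ u : G, (∃ a ∈ A, a.src = u) →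
      ∃ J : Finset I,
        (∃ Ahat : I → Set (GArr G),
          (∀ j ∈ J, Ahat j ⊆ srcFiber (Afam j) u) ∧
          (∀ j ∈ J, ∀ k ∈ J, j ≠ k → Disjoint (Ahat j) (Ahat k)) ∧
          (∀ j ∈ J, (1 - ε) * ((srcFiber (Afam j) u).ncard : ℝ) ≤ ((Ahat j).ncard : ℝ))) ∧
        ε * lam * ((srcFiber A u).ncard : ℝ) ≤
          ((⋃ j ∈ J, srcFiber (Afam j) u).ncard : ℝ) := by
  classical
  intro u hu
  have hFfin : (srcFiber A u).Finite := hAfin u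
  have hFisub : ∀ i, srcFiber (Afam i) u ⊆ srcFiber A u := fun i a ha => ⟨hsub i ha.1, ha.2⟩
  have hFi : ∀ i, (srcFiber (Afam i) u).Finite := fun i => hFfin.subset (hFisub i)
  set P : Finset I → Prop := fun J =>
    ∃ Ahat : I → Set (GArr G),
      (∀ j ∈ J, Ahat j ⊆ srcFiber (Afam j) u) ∧
      (∀ j ∈ J, ∀ k ∈ J, j ≠ k → Disjoint (Ahat j) (Ahat k)) ∧
      (∀ j ∈ J, (1 - ε) * ((srcFiber (Afam j) u).ncard : ℝ) ≤ ((Ahat j).ncard : ℝ)) with hPdef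
  have hPempty : P ∅ := ⟨fun _ => ∅, by simp, by simp, by simp⟩
  obtain ⟨J, hJP, hJmax⟩ : ∃ J, P J ∧ ∀ J', P J' → J'.card ≤ J.card := by
    obtain ⟨J, hJ, hmax⟩ := Finset.exists_max_image (Finset.univ.filter P) Finset.card
      ⟨∅, by simp [hPempty]⟩
    exact ⟨J, (Finset.mem_filter.1 hJ).2, fun J' hJ' => hmax J' (by simp [hJ'])⟩
  refine ⟨J, hJP, ?_⟩
  set U : Set (GArr G) := ⋃ j ∈ J, srcFiber (Afam j) u with hUdef
  have hUsub : U ⊆ srcFiber A u := by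
    intro g hg
    simp only [hUdef, Set.mem_iUnion] at hg
    obtain ⟨j, _, hj⟩ := hg
    exact hFisub j hj
  have hUfin : U.Finite := hFfin.subset hUsub
  have hsubU' : ∀ j, j ∈ J → srcFiber (Afam j) u ⊆ U := by
    intro j hj a ha
    simp only [hUdef, Set.mem_iUnion]
    exact ⟨j, hj, ha⟩
  -- key pointwise estimate
  have hkey : ∀ i : I, ε * ((srcFiber (Afam i) u).ncard : ℝ) ≤
      ((srcFiber (Afam i) u ∩ U).ncard : ℝ) := by
    intro i
    by_cases hiJ : i ∈ J
    · have hsubU : srcFiber (Afam i) u ⊆ U := hsubU' i hiJ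
      rw [Set.inter_eq_self_of_subset_left hsubU]
      have : (0:ℝ) ≤ ((srcFiber (Afam i) u).ncard : ℝ) := Nat.cast_nonneg _
      nlinarith
    · by_contra hlt
      push_neg at hlt
      have hsplit : ((srcFiber (Afam i) u ∩ U).ncard : ℝ) +
          (((srcFiber (Afam i) u) \ U).ncard : ℝ) = ((srcFiber (Afam i) u).ncard : ℝ) := by
        exact_mod_cast congrArg (Nat.cast (R := ℝ))
          (Set.ncard_inter_add_ncard_diff_eq_ncard (srcFiber (Afam i) u) U (hFi i))
      have hdiff : (1 - ε) * ((srcFiber (Afam i) u).ncard : ℝ) ≤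
          (((srcFiber (Afam i) u) \ U).ncard : ℝ) := by linarith
      obtain ⟨Ahat, h1, h2, h3⟩ := hJP
      have hPins : P (insert i J) := by
        refine ⟨fun k => if k = i then (srcFiber (Afam i) u) \ U else Ahat k, ?_, ?_, ?_⟩
        · intro j hj
          by_cases hji : j = i
          · subst hji; simp only [if_pos rfl]; exact Set.diff_subset
          · simp only [if_neg hji]
            exact h1 j ((Finset.mem_insert.1 hj).resolve_left hji)
        · intro j hj k hk hjk
          by_cases hji : j = i
          · by_cases hki : k = i
            · exact absurd (hji.trans hki.symm) hjk
            · have hkJ : k ∈ J := (Finset.mem_insert.1 hk).resolve_left hki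
              simp only [hji, if_pos rfl, if_neg hki]
              exact Set.disjoint_sdiff_left.mono_right ((h1 k hkJ).trans (hsubU' k hkJ))
          · by_cases hki : k = i
            · have hjJ : j ∈ J := (Finset.mem_insert.1 hj).resolve_left hji
              simp only [hki, if_pos rfl, if_neg hji]
              exact (Set.disjoint_sdiff_left.mono_right
                ((h1 j hjJ).trans (hsubU' j hjJ))).symm
            · simp only [if_neg hji, if_neg hki]
              exact h2 j ((Finset.mem_insert.1 hj).resolve_left hji) k
                ((Finset.mem_insert.1 hk).resolve_left hki) hjk
        · intro j hj
          by_cases hji : j = i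
          · subst hji; simpa using hdiff
          · simp only [if_neg hji]
            exact h3 j ((Finset.mem_insert.1 hj).resolve_left hji)
      have := hJmax _ hPins
      rw [Finset.card_insert_of_notMem hiJ] at this
      omega
  -- double counting
  have hFU : ∀ g, g ∈ hUfin.toFinset ↔ g ∈ U := fun g => Set.Finite.mem_toFinset _
  have hnat : ∑ i : I, ((srcFiber (Afam i) u ∩ U).ncard) ≤ M * U.ncard := by
    have hcard : ∀ i : I, (srcFiber (Afam i) u ∩ U).ncard =
        (hUfin.toFinset.filter (fun g => g ∈ srcFiber (Afam i) u)).card := by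
      intro i
      rw [← Set.ncard_coe_finset]
      congr 1
      ext g
      simp [Set.Finite.mem_toFinset, Set.mem_inter_iff, and_comm]
    have hU' : U.ncard = hUfin.toFinset.card := by
      rw [← Set.ncard_coe_finset]; congr 1; simp
    calc ∑ i : I, ((srcFiber (Afam i) u ∩ U).ncard)
        = ∑ i : I, ∑ g ∈ hUfin.toFinset, if g ∈ srcFiber (Afam i) u then 1 else 0 := by
          refine Finset.sum_congr rfl fun i _ => ?_
          rw [hcard i, Finset.card_filter]
      _ = ∑ g ∈ hUfin.toFinset, ∑ i : I, if g ∈ srcFiber (Afam i) u then 1 else 0 :=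
          Finset.sum_comm
      _ ≤ ∑ _g ∈ hUfin.toFinset, M := by
          refine Finset.sum_le_sum fun g hg => ?_
          have hgU : g ∈ U := (hFU g).1 hg
          have hgA : g ∈ srcFiber A u := hUsub hgU
          have := hmult u hu g hgA
          have heq : ({i : I | g ∈ srcFiber (Afam i) u}).ncard =
              (Finset.univ.filter (fun i : I => g ∈ srcFiber (Afam i) u)).card := by
            rw [← Set.ncard_coe_finset]; congr 1; ext i; simp
          rw [← Finset.card_filter, ← heq]
          exact this
      _ = M * U.ncard := by
          rw [Finset.sum_const, smul_eq_mul, hU', mul_comm]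
  have h3 : ∑ i : I, ((srcFiber (Afam i) u ∩ U).ncard : ℝ) ≤ (M : ℝ) * (U.ncard : ℝ) := by
    exact_mod_cast hnat
  have h2 : ε * ∑ i : I, ((srcFiber (Afam i) u).ncard : ℝ) ≤
      ∑ i : I, ((srcFiber (Afam i) u ∩ U).ncard : ℝ) := by
    rw [Finset.mul_sum]
    exact Finset.sum_le_sum fun i _ => hkey i
  have h1 := hcover u hu
  have h4 : ε * (lam * M * ((srcFiber A u).ncard : ℝ)) ≤ (M : ℝ) * (U.ncard : ℝ) := by
    calc ε * (lam * M * ((srcFiber A u).ncard : ℝ))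
        ≤ ε * ∑ i : I, ((srcFiber (Afam i) u).ncard : ℝ) :=
          mul_le_mul_of_nonneg_left h1 hε0
      _ ≤ (M : ℝ) * (U.ncard : ℝ) := le_trans h2 h3
  have hM' : (0:ℝ) < (M : ℝ) := by exact_mod_cast hM
  nlinarith [h4, hM']
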